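/- Let $X,Y_1,\dots,Y_N:[0,T]\to\mathbb{R}$ with $\sup_i\|Y_i\|_\infty\le\Delta^{-1/28}$ and Lipschitz constants $\mathcal{H}_1(X),\mathcal{H}_1(Y_i)\le\Delta^{-1/28}$, let $W_1,\dots,W_N:[0,T]\to\mathbb{R}$ with $\sup_i\sup_{[0,T]}|W_i|\le\Delta^{-1/28}$, and define $Z(s)=-\sum_i Y_i(s)W_i(s)$ and $H=X-Z$. Fix a block $I_k=[t_{k-1},t_k]$ of length $\le\Delta$ subdivided at points $s_0<\dots<s_M$ with spacings $\le\delta=\Delta^{5/3}$ and $M\le\Delta^{-2/3}+1$. Define $Q_k(f)=\sum_{\ell=1}^M(f(s_\ell)-f(s_{\ell-1}))^2$. Then: (i) $Q_k(X)\le 2\Delta^{109/42}$; (ii) if in addition $\sup_{s\in I_k}|H(s)|<\Delta$, then $Q_k(Z)\le 2Q_k(X)+8\Delta^{4/3}+8\Delta^2$. -/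
import Mathlib


open Set Finset

/-- Part of Lemma 6.7 (l:mainDeterministicSmall) of Mattingly–Pardoux: deterministic bounds
on the `δ`-scale quadratic variation over a block `[a,b]` of length at most `Δ`.
Here `Z(s) = -∑ᵢ Yᵢ(s) Wᵢ(s)`, `H = X - Z`, and
`Q(f) = ∑_{ℓ=1}^{M} (f(s_ℓ) - f(s_{ℓ-1}))²`. Then `Q(X) ≤ 2 Δ^(109/42)`, and if moreover
`sup_{[a,b]} |H| < Δ` then `Q(Z) ≤ 2 Q(X) + 8 Δ^(4/3) + 8 Δ²`. -/
theorem stmt13 (N : ℕ) (T Δ : ℝ) (hT : 0 < T) (hΔ : Δ ∈ Ioc (0:ℝ) 1)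
    (X : ℝ → ℝ) (Y W : Fin N → ℝ → ℝ)
    (hY : ∀ i, ∀ r ∈ Icc (0:ℝ) T, |Y i r| ≤ Δ ^ (-(1:ℝ)/28))
    (hW : ∀ i, ∀ r ∈ Icc (0:ℝ) T, |W i r| ≤ Δ ^ (-(1:ℝ)/28))
    (hXLip : ∀ r ∈ Icc (0:ℝ) T, ∀ r' ∈ Icc (0:ℝ) T,
      0 < |r - r'| → |r - r'| ≤ 1 → |X r - X r'| ≤ Δ ^ (-(1:ℝ)/28) * |r - r'|)
    (hYLip : ∀ i, ∀ r ∈ Icc (0:ℝ) T, ∀ r' ∈ Icc (0:ℝ) T,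
      0 < |r - r'| → |r - r'| ≤ 1 → |Y i r - Y i r'| ≤ Δ ^ (-(1:ℝ)/28) * |r - r'|)
    (Z H : ℝ → ℝ)
    (hZ : ∀ r, Z r = -∑ i, Y i r * W i r) (hH : ∀ r, H r = X r - Z r)
    (a b : ℝ) (hab : a ≤ b) (ha : 0 ≤ a) (hb : b ≤ T) (hlen : b - a ≤ Δ)
    (Mk : ℕ) (s : ℕ → ℝ) (hs0 : s 0 = a) (hsM : s Mk = b)
    (hmono : ∀ ℓ < Mk, s ℓ ≤ s (ℓ + 1))
    (hmesh : ∀ ℓ < Mk, s (ℓ + 1) - s ℓ ≤ Δ ^ ((5:ℝ)/3))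
    (hin : ∀ ℓ ≤ Mk, s ℓ ∈ Icc a b)
    (hMk : (Mk : ℝ) ≤ Δ ^ (-(2:ℝ)/3) + 1) :
    (∑ ℓ ∈ range Mk, (X (s (ℓ + 1)) - X (s ℓ)) ^ 2) ≤ 2 * Δ ^ ((109:ℝ)/42) ∧
    ((∀ r ∈ Icc a b, |H r| < Δ) →
      (∑ ℓ ∈ range Mk, (Z (s (ℓ + 1)) - Z (s ℓ)) ^ 2) ≤
        2 * (∑ ℓ ∈ range Mk, (X (s (ℓ + 1)) - X (s ℓ)) ^ 2)
          + 8 * Δ ^ ((4:ℝ)/3) + 8 * Δ ^ 2) := by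
  obtain ⟨hΔ0, hΔ1⟩ := hΔ
  have hin' : ∀ ℓ ≤ Mk, s ℓ ∈ Icc (0:ℝ) T := fun ℓ hℓ => by
    obtain ⟨h1, h2⟩ := hin ℓ hℓ
    exact ⟨le_trans ha h1, le_trans h2 hb⟩
  have hδ1 : Δ ^ ((5:ℝ)/3) ≤ 1 := Real.rpow_le_one (le_of_lt hΔ0) hΔ1 (by norm_num)
  -- per-increment bound for X
  have hXinc : ∀ ℓ < Mk, |X (s (ℓ+1)) - X (s ℓ)| ≤ Δ ^ (-(1:ℝ)/28) * Δ ^ ((5:ℝ)/3) := by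
    intro ℓ hℓ
    rcases eq_or_lt_of_le (hmono ℓ hℓ) with heq | hlt
    · rw [heq]
      simp
      positivity
    · have habs : |s (ℓ+1) - s ℓ| = s (ℓ+1) - s ℓ := abs_of_pos (by linarith)
      have := hXLip _ (hin' (ℓ+1) hℓ) _ (hin' ℓ (le_of_lt hℓ))
        (by rw [habs]; linarith) (by rw [habs]; linarith [hmesh ℓ hℓ])
      calc |X (s (ℓ+1)) - X (s ℓ)| ≤ Δ ^ (-(1:ℝ)/28) * |s (ℓ+1) - s ℓ| := this
        _ ≤ Δ ^ (-(1:ℝ)/28) * Δ ^ ((5:ℝ)/3) := by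
            apply mul_le_mul_of_nonneg_left _ (by positivity)
            rw [habs]; exact hmesh ℓ hℓ
  have hQX : (∑ ℓ ∈ range Mk, (X (s (ℓ + 1)) - X (s ℓ)) ^ 2) ≤
      (Mk : ℝ) * (Δ ^ (-(1:ℝ)/28) * Δ ^ ((5:ℝ)/3)) ^ 2 := by
    have key := Finset.sum_le_card_nsmul (range Mk)
      (fun ℓ => (X (s (ℓ+1)) - X (s ℓ)) ^ 2) ((Δ ^ (-(1:ℝ)/28) * Δ ^ ((5:ℝ)/3)) ^ 2) ?_
    · simpa [nsmul_eq_mul] using key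
    · intro ℓ hℓ
      rw [Finset.mem_range] at hℓ
      have := hXinc ℓ hℓ
      calc (X (s (ℓ+1)) - X (s ℓ)) ^ 2 = |X (s (ℓ+1)) - X (s ℓ)| ^ 2 := (sq_abs _).symm
        _ ≤ (Δ ^ (-(1:ℝ)/28) * Δ ^ ((5:ℝ)/3)) ^ 2 := by
            apply pow_le_pow_left₀ (abs_nonneg _) this
  have hc : (Δ ^ (-(1:ℝ)/28) * Δ ^ ((5:ℝ)/3)) ^ 2 = Δ ^ ((137:ℝ)/42) := by
    rw [← Real.rpow_add hΔ0, ← Real.rpow_natCast (Δ ^ _) 2, ← Real.rpow_mul (le_of_lt hΔ0)]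
    norm_num
  have hpart1 : (∑ ℓ ∈ range Mk, (X (s (ℓ + 1)) - X (s ℓ)) ^ 2) ≤ 2 * Δ ^ ((109:ℝ)/42) := by
    refine hQX.trans ?_
    rw [hc]
    have h1 : (Mk : ℝ) * Δ ^ ((137:ℝ)/42) ≤ (Δ ^ (-(2:ℝ)/3) + 1) * Δ ^ ((137:ℝ)/42) :=
      mul_le_mul_of_nonneg_right hMk (by positivity)
    refine h1.trans ?_
    rw [add_mul, one_mul, ← Real.rpow_add hΔ0]
    have e1 : (-(2:ℝ)/3 + 137/42) = (109:ℝ)/42 := by norm_num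
    rw [e1]
    have h2 : Δ ^ ((137:ℝ)/42) ≤ Δ ^ ((109:ℝ)/42) :=
      Real.rpow_le_rpow_of_exponent_ge hΔ0 hΔ1 (by norm_num)
    linarith
  refine ⟨hpart1, ?_⟩
  intro hHb
  have hZX : ∀ r, Z r = X r - H r := fun r => by rw [hH r]; ring
  have hterm : ∀ ℓ ∈ range Mk, (Z (s (ℓ+1)) - Z (s ℓ)) ^ 2 ≤
      2 * (X (s (ℓ+1)) - X (s ℓ)) ^ 2 + 2 * (2*Δ) ^ 2 := by
    intro ℓ hℓ
    rw [Finset.mem_range] at hℓ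
    have hH1 := hHb _ (hin (ℓ+1) hℓ)
    have hH2 := hHb _ (hin ℓ (le_of_lt hℓ))
    have habs1 := abs_lt.mp hH1
    have habs2 := abs_lt.mp hH2
    have e : Z (s (ℓ+1)) - Z (s ℓ) = (X (s (ℓ+1)) - X (s ℓ)) - (H (s (ℓ+1)) - H (s ℓ)) := by
      rw [hZX, hZX]; ring
    rw [e]
    have h1 : (H (s (ℓ+1)) - H (s ℓ)) ^ 2 ≤ (2*Δ)^2 := by nlinarith
    nlinarith [sq_nonneg (X (s (ℓ+1)) - X (s ℓ) + (H (s (ℓ+1)) - H (s ℓ)))]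
  have hsum := Finset.sum_le_sum hterm
  rw [Finset.sum_add_distrib, ← Finset.mul_sum, Finset.sum_const, Finset.card_range,
    nsmul_eq_mul] at hsum
  refine hsum.trans ?_
  have h2 : (Mk : ℝ) * (2 * (2*Δ)^2) ≤ (Δ ^ (-(2:ℝ)/3) + 1) * (8 * Δ^2) := by
    have : (2 * (2*Δ)^2) = 8 * Δ^2 := by ring
    rw [this]
    exact mul_le_mul_of_nonneg_right hMk (by positivity)
  have h3 : Δ ^ (-(2:ℝ)/3) * Δ^2 = Δ ^ ((4:ℝ)/3) := by
    rw [← Real.rpow_natCast Δ 2, ← Real.rpow_add hΔ0]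
    norm_num
  nlinarith [h2, h3]
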